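/- Suppose for every measurable classifier φ : (Z^{n-1} × X) → [A], the prior-averaged excess risk ∫ E_{ℙ^n}[1{Y_n^{φ(F_{n-1},X_n)} ≠ 1} − 1{Y_n^{π_*(X_n)} ≠ 1}] dp(ℙ) ≥ ε. Then for every bandit policy π and every t ∈ [n], the prior-averaged expected instantaneous regret ∫ E_{ℙ^n}[Y_n^{π_*(X_n)} − Y_n^{π_t(X_n)}] dp(ℙ) ≥ ε, where π_t(X_n) denotes the action the policy π would select at round t given history {(X_s, Y_s)}_{s<t} and covariate X_n. -/
import Mathlib


open MeasureTheory

/-- One-hot reward vectors: `𝒴_class = {y ∈ {0,1}^A : ∑ a, y a = 1}`. -/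
def Yclass (A : ℕ) : Type :=
  {y : Fin A → ℝ // (∀ a, y a = 0 ∨ y a = 1) ∧ ∑ a, y a = 1}

instance (A : ℕ) : MeasurableSpace (Yclass A) := Subtype.instMeasurableSpace

theorem classification_lower_bound_transfers_to_bandits
    {X : Type*} [MeasurableSpace X] (A : ℕ) (hA : 0 < A)
    (n : ℕ) (hn : 0 < n)
    {P : Type*} [MeasurableSpace P] (p : Measure P) [IsProbabilityMeasure p]
    (m : P → Measure (X × Yclass A)) (hm : ∀ Q, IsProbabilityMeasure (m Q))
    (πstar : P → X → Fin A) (ε : ℝ)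
    -- the last coordinate, corresponding to the test point `(X_n, Y_n)`
    (last : Fin n) (hlast : (last : ℕ) = n - 1)
    -- hypothesis: every classifier using only `(F_{n-1}, X_n)` has
    -- prior-averaged excess risk at least `ε`
    (hclass : ∀ φ : (Fin n → X × Yclass A) → Fin A, Measurable φ →
      (∀ F F' : Fin n → X × Yclass A,
        (∀ s, s ≠ last → F s = F' s) → (F last).1 = (F' last).1 → φ F = φ F') →
      ε ≤ ∫ Q, (∫ F, ((if ((F last).2 : Yclass A).1 (φ F) ≠ 1 then (1 : ℝ) else 0) -
            (if ((F last).2 : Yclass A).1 (πstar Q (F last).1) ≠ 1 then (1 : ℝ) else 0))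
          ∂(Measure.pi fun _ => m Q)) ∂p)
    -- a bandit policy: `π t` selects an action from the history of the first
    -- `t - 1` samples together with a covariate
    (π : ℕ → (Fin n → X × Yclass A) → X → Fin A)
    (hπmeas : ∀ t, Measurable fun Fx : (Fin n → X × Yclass A) × X => π t Fx.1 Fx.2)
    (hdep : ∀ t : ℕ, ∀ F F' : Fin n → X × Yclass A, ∀ x : X,
      (∀ s : Fin n, (s : ℕ) + 1 < t → F s = F' s) → π t F x = π t F' x) :
    ∀ t ∈ Finset.Icc 1 n,
      ε ≤ ∫ Q, (∫ F, (((F last).2 : Yclass A).1 (πstar Q (F last).1) -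
            ((F last).2 : Yclass A).1 (π t F (F last).1))
          ∂(Measure.pi fun _ => m Q)) ∂p := by
  intro t ht
  simp only [Finset.mem_Icc] at ht
  set φ : (Fin n → X × Yclass A) → Fin A := fun F => π t F (F last).1 with hφ
  have hmeas : Measurable φ :=
    (hπmeas t).comp (measurable_id.prodMk ((measurable_pi_apply last).fst))
  have hdepφ : ∀ F F' : Fin n → X × Yclass A,
      (∀ s, s ≠ last → F s = F' s) → (F last).1 = (F' last).1 → φ F = φ F' := by
    intro F F' h1 h2
    have hpi : π t F (F last).1 = π t F' (F last).1 := by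
      apply hdep
      intro s hs
      apply h1
      intro hsl
      have hcs : (s : ℕ) = n - 1 := by rw [hsl, hlast]
      omega
    simp only [hφ, hpi, h2]
  have key := hclass φ hmeas hdepφ
  have heq : ∀ (Q : P) (F : Fin n → X × Yclass A),
      ((if ((F last).2 : Yclass A).1 (φ F) ≠ 1 then (1 : ℝ) else 0) -
        (if ((F last).2 : Yclass A).1 (πstar Q (F last).1) ≠ 1 then (1 : ℝ) else 0))
      = (((F last).2 : Yclass A).1 (πstar Q (F last).1) -
          ((F last).2 : Yclass A).1 (π t F (F last).1)) := by
    intro Q F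
    have ind : ∀ a : Fin A,
        (if ((F last).2 : Yclass A).1 a ≠ 1 then (1 : ℝ) else 0)
          = 1 - ((F last).2 : Yclass A).1 a := by
      intro a
      rcases ((F last).2 : Yclass A).2.1 a with h | h <;> simp [h]
    rw [ind, ind]
    simp only [hφ]
    ring
  calc ε ≤ _ := key
    _ = _ := by
        refine integral_congr_ae (Filter.Eventually.of_forall fun Q => ?_)
        exact integral_congr_ae (Filter.Eventually.of_forall fun F => heq Q F)
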